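/- Let ξ be a unit eigenvector of a Hermitian matrix Z with |Z|ξ = ‖Z‖ξ and ‖Z‖ < π. Then the curve α(t) = e^{itZ} ξ, t ∈ [0,1], on the unit sphere of ℂⁿ satisfies α''(t) = −‖Z‖² α(t), i.e. it is a great-circle geodesic of the sphere of speed ‖Z‖. -/

import Mathlib

open Matrix
open scoped ComplexOrder

noncomputable section

/-- n×n complex matrices -/
abbrev Mat (n : ℕ) := Matrix (Fin n) (Fin n) ℂ

/-- the old `Matrix.PosSemidef.sqrt` (removed from Mathlib), with its old definition -/
noncomputable def posSemidefSqrtOld {n : ℕ} {A : Mat n} (hA : A.PosSemidef) : Mat n :=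
  hA.1.eigenvectorUnitary.1 * diagonal ((↑) ∘ (√·) ∘ hA.1.eigenvalues) *
  (star hA.1.eigenvectorUnitary : Mat n)

theorem posSemidefSqrtOld_isHermitian {n : ℕ} {A : Mat n} (hA : A.PosSemidef) :
    (posSemidefSqrtOld hA).IsHermitian := by
  unfold posSemidefSqrtOld
  have := isHermitian_mul_mul_conjTranspose (hA.1.eigenvectorUnitary.1)
    (isHermitian_diagonal_of_self_adjoint ((↑) ∘ (√·) ∘ hA.1.eigenvalues : Fin n → ℂ)
      (by ext i; simp))
  simpa [Matrix.star_eq_conjTranspose] using this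

/-- modulus |A| = sqrt (Aᴴ A) -/
noncomputable def matAbs {n : ℕ} (A : Mat n) : Mat n :=
  posSemidefSqrtOld (Matrix.posSemidef_conjTranspose_mul_self A)

/-- spectral (operator) norm -/
noncomputable def specNorm {n : ℕ} (A : Mat n) : ℝ :=
  ‖Matrix.toEuclideanCLM (𝕜 := ℂ) (n := Fin n) A‖

/-- Löwner order: `A ≤ B` iff `B - A` is positive semidefinite -/
def loewnerLE {n : ℕ} (A B : Mat n) : Prop := (B - A).PosSemidef

/-- singular values of `A`, arranged in non-increasing order -/
noncomputable def sval {n : ℕ} (A : Mat n) : Fin n → ℝ :=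
  fun i =>
    let e := (posSemidefSqrtOld_isHermitian (Matrix.posSemidef_conjTranspose_mul_self A)).eigenvalues
    (e ∘ Tuple.sort e) i.rev

/-- singular values indexed by naturals (0 beyond the size) -/
noncomputable def svalNat {n : ℕ} (A : Mat n) (k : ℕ) : ℝ :=
  if h : k < n then sval A ⟨k, h⟩ else 0

/-- eigenvalues of a Hermitian matrix, arranged in non-increasing order -/
noncomputable def eigsDesc {n : ℕ} {A : Mat n} (hA : A.IsHermitian) : Fin n → ℝ :=
  fun i => (hA.eigenvalues ∘ Tuple.sort hA.eigenvalues) i.rev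

theorem posSemidefSqrtOld_mul_self {n : ℕ} {A : Mat n} (hA : A.PosSemidef) :
    posSemidefSqrtOld hA * posSemidefSqrtOld hA = A := by
  unfold posSemidefSqrtOld
  conv_rhs => rw [hA.1.spectral_theorem, Unitary.conjStarAlgAut_apply]
  have hU : (star hA.1.eigenvectorUnitary : Mat n) * (hA.1.eigenvectorUnitary : Mat n) = 1 := by
    simp
  calc _ = (hA.1.eigenvectorUnitary : Mat n) * (diagonal ((↑) ∘ (√·) ∘ hA.1.eigenvalues) *
        ((star hA.1.eigenvectorUnitary : Mat n) * (hA.1.eigenvectorUnitary : Mat n)) *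
        diagonal ((↑) ∘ (√·) ∘ hA.1.eigenvalues)) * (star hA.1.eigenvectorUnitary : Mat n) := by
        simp only [mul_assoc]
    _ = _ := by
      rw [hU, mul_one, diagonal_mul_diagonal]
      congr 3
      funext i
      simp only [Function.comp_apply, RCLike.ofReal_real_eq_id, id]
      rw [← Complex.ofReal_mul, Real.mul_self_sqrt (hA.eigenvalues_nonneg i)]
      rfl

set_option synthInstance.maxHeartbeats 1000000 in
set_option maxHeartbeats 1000000 in
theorem stmt10 {n : ℕ} (Z : Mat n) (hZ : Z.IsHermitian) (hZn : specNorm Z < Real.pi)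
    (ξ : EuclideanSpace ℂ (Fin n)) (hξ : ‖ξ‖ = 1)
    (heig : Matrix.toEuclideanCLM (𝕜 := ℂ) (matAbs Z) ξ = (specNorm Z : ℂ) • ξ) :
    ∀ t : ℝ,
      deriv (deriv (fun s : ℝ =>
          Matrix.toEuclideanCLM (𝕜 := ℂ) (NormedSpace.exp ((s : ℂ) • Complex.I • Z)) ξ)) t
        = (-(specNorm Z ^ 2)) •
            Matrix.toEuclideanCLM (𝕜 := ℂ) (NormedSpace.exp ((t : ℂ) • Complex.I • Z)) ξ := by
  intro t
  set T := Matrix.toEuclideanCLM (𝕜 := ℂ) (n := Fin n)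
  set B : EuclideanSpace ℂ (Fin n) →L[ℂ] EuclideanSpace ℂ (Fin n) := T (Complex.I • Z) with hB
  have hTexp : ∀ M : Mat n, T (NormedSpace.exp M) = NormedSpace.exp (T M) := by
    letI : NormedRing (Mat n) := Matrix.linftyOpNormedRing
    letI : NormedAlgebra ℂ (Mat n) := Matrix.linftyOpNormedAlgebra
    intro M
    have hcont : Continuous (fun M : Mat n => T M) :=
      LinearMap.continuous_of_finiteDimensional
        ({ toFun := fun M : Mat n => T M,
           map_add' := fun a b => map_add T a b,
           map_smul' := fun c a => map_smul T c a } :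
          Mat n →ₗ[ℂ] (EuclideanSpace ℂ (Fin n) →L[ℂ] EuclideanSpace ℂ (Fin n)))
    exact NormedSpace.map_exp_of_mem_ball (𝕂 := ℂ) (𝔸 := Mat n)
      (𝔹 := EuclideanSpace ℂ (Fin n) →L[ℂ] EuclideanSpace ℂ (Fin n)) T hcont M
      ((NormedSpace.expSeries_radius_eq_top ℂ (Mat n)).symm ▸ edist_lt_top _ _)
  have hfun : ∀ v : EuclideanSpace ℂ (Fin n),
      (fun s : ℝ => T (NormedSpace.exp ((s : ℂ) • Complex.I • Z)) v)
        = fun s : ℝ => NormedSpace.exp (s • B) v := by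
    intro v
    funext s
    rw [hTexp, _root_.map_smul, ← hB,
      show ((s : ℂ)) • B = s • B from algebraMap_smul ℂ s B]
  have hD : ∀ (v : EuclideanSpace ℂ (Fin n)) (s : ℝ),
      HasDerivAt (fun u : ℝ => NormedSpace.exp (u • B) v)
        (NormedSpace.exp (s • B) (B v)) s := by
    intro v s
    have h := (((ContinuousLinearMap.apply ℂ (EuclideanSpace ℂ (Fin n)) v).restrictScalars
        ℝ).hasFDerivAt).comp_hasDerivAt s (hasDerivAt_exp_smul_const (𝕂 := ℝ) B s)
    exact h
  have hBB : B (B ξ) = (-(specNorm Z ^ 2) : ℝ) • ξ := by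
    have h1 : B (B ξ) = T ((Complex.I • Z) * (Complex.I • Z)) ξ := by
      rw [_root_.map_mul]; rfl
    have h2 : (Complex.I • Z) * (Complex.I • Z) = -(matAbs Z * matAbs Z) := by
      unfold matAbs
      rw [posSemidefSqrtOld_mul_self (Matrix.posSemidef_conjTranspose_mul_self Z), hZ.eq,
        smul_mul_smul_comm, Complex.I_mul_I, neg_smul, one_smul]
    rw [h1, h2, map_neg, _root_.map_mul]
    have : (T (matAbs Z) * T (matAbs Z)) ξ = T (matAbs Z) (T (matAbs Z) ξ) := rfl
    rw [ContinuousLinearMap.neg_apply, this, heig, _root_.map_smul, heig, smul_smul,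
      ← Complex.ofReal_mul, ← pow_two, ← Complex.coe_smul, ← neg_smul]
    norm_cast
  rw [hfun]
  have h1 : deriv (fun s : ℝ => NormedSpace.exp (s • B) ξ)
      = fun s : ℝ => NormedSpace.exp (s • B) (B ξ) :=
    funext fun s => (hD ξ s).deriv
  rw [h1, (hD (B ξ) t).deriv, hBB, ContinuousLinearMap.map_smul_of_tower, congrFun (hfun ξ) t]


end
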